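/- In a directed graph with a designated set S of stubborn nodes, if p is an LTP agent and q ∈ N_p (q is persuaded by p), then every in-neighbour of q belongs to N_p ∪ {p}. -/

import Mathlib

/-- `l` is a directed path (a walk without repeated nodes) from `s` to `t` in the
digraph with edge relation `E`. -/
def IsPathList {V : Type*} (E : V → V → Prop) (s t : V) (l : List V) : Prop :=
  l.Chain' E ∧ l.head? = some s ∧ l.getLast? = some t ∧ l.Nodup

/-- `q` is persuaded by `p`: `q` is a non-stubborn node distinct from `p` such that
every directed path from every stubborn node to `q` traverses `p`. -/
def Persuaded {V : Type*} (E : V → V → Prop) (S : Set V) (p q : V) : Prop :=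
  q ∉ S ∧ q ≠ p ∧ ∀ s ∈ S, ∀ l : List V, IsPathList E s q l → p ∈ l

/-- `p` is a Locally Topologically Persuasive (LTP) agent: some non-stubborn node is
persuaded by `p`, and if `p` is non-stubborn then there is no node `c ≠ p` through
which every path from stubborn nodes to `p` passes. -/
def IsLTP {V : Type*} (E : V → V → Prop) (S : Set V) (p : V) : Prop :=
  (∃ q, Persuaded E S p q) ∧
  (p ∉ S → ¬ ∃ c, c ≠ p ∧ ∀ s ∈ S, ∀ l : List V, IsPathList E s p l → c ∈ l)

/-- Extend a path by one edge. -/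
lemma path_extend {V : Type*} {E : V → V → Prop} {s t q : V} {l : List V}
    (h : IsPathList E s t l) (ht : E t q) (hq : q ∉ l) :
    IsPathList E s q (l ++ [q]) := by
  obtain ⟨hc, hh, hl, hn⟩ := h
  refine ⟨?_, ?_, ?_, ?_⟩
  · show List.IsChain E (l ++ [q]); rw [List.isChain_append]
    refine ⟨hc, List.isChain_singleton q, ?_⟩
    intro x hx y hy
    simp only [List.head?_cons, Option.mem_def, Option.some.injEq] at hy
    rw [hl] at hx
    simp only [Option.mem_def, Option.some.injEq] at hx
    subst hx; subst hy; exact ht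
  · cases l with
    | nil => simp at hh
    | cons a l' => simpa using hh
  · simp
  · simp only [List.nodup_append, List.nodup_singleton]
    exact ⟨hn, trivial, by intro a ha b hb h; rw [List.mem_singleton] at hb; subst hb; subst h; exact hq ha⟩

/-- Truncate a path at an occurrence of `q`. -/
lemma path_truncate {V : Type*} {E : V → V → Prop} {s t q : V} {l : List V}
    (h : IsPathList E s t l) (hq : q ∈ l) (hsq : s ≠ q) :
    ∃ a, (a ++ [q] <:+: l) ∧ IsPathList E s q (a ++ [q]) := by
  obtain ⟨hc, hh, hl, hn⟩ := h
  obtain ⟨a, b, rfl⟩ := List.append_of_mem hq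
  refine ⟨a, ⟨[], b, by simp⟩, ?_, ?_, ?_, ?_⟩
  · have : (a ++ [q]) ++ b = a ++ q :: b := by simp
    rw [← this] at hc
    exact hc.left_of_append
  · cases a with
    | nil => simp at hh; exact absurd hh.symm hsq
    | cons x a' => simp at hh ⊢; exact hh
  · simp
  · have : (a ++ [q]).Sublist (a ++ q :: b) := by
      apply List.Sublist.append_left
      simp
    exact hn.sublist this

/-- If `p` is an LTP agent and `q ∈ N_p`, then every in-neighbour of `q` belongs
to `N_p ∪ {p}`. -/
theorem in_neighbour_of_persuaded {V : Type*} (E : V → V → Prop) (S : Set V)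
    (hreach : ∀ v, v ∉ S → ∃ s ∈ S, ∃ l : List V, IsPathList E s v l)
    (p q : V) (hp : IsLTP E S p) (hq : Persuaded E S p q)
    (t : V) (ht : E t q) :
    t = p ∨ Persuaded E S p t := by
  by_cases htp : t = p
  · exact Or.inl htp
  right
  obtain ⟨hqS, hqp, hqpath⟩ := hq
  have htS : t ∉ S := by
    intro htS
    have hpl : IsPathList E t q [t, q] := by
      refine ⟨List.isChain_pair.mpr ht, by simp, by simp, ?_⟩
      simp only [List.nodup_cons, List.mem_singleton, List.not_mem_nil,
        not_false_eq_true, List.nodup_nil, and_true, true_and]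
      exact fun h => hqS (h ▸ htS)
    have := hqpath t htS [t, q] hpl
    simp at this
    rcases this with h | h
    · exact htp h.symm
    · exact hqp h.symm
  refine ⟨htS, fun h => htp h, ?_⟩
  intro s hs l hl
  by_cases hql : q ∈ l
  · have hsq : s ≠ q := fun h => hqS (h ▸ hs)
    obtain ⟨a, hinfix, hpath⟩ := path_truncate hl hql hsq
    have hpmem := hqpath s hs (a ++ [q]) hpath
    have : p ∈ a := by
      rcases List.mem_append.mp hpmem with h | h
      · exact h
      · simp at h; exact absurd h.symm hqp
    exact hinfix.sublist.subset (by simp [this])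
  · have hpath := path_extend hl ht hql
    have hpmem := hqpath s hs (l ++ [q]) hpath
    rcases List.mem_append.mp hpmem with h | h
    · exact h
    · simp at h; exact absurd h.symm hqp
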